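/- There exists a constant C > 0 such that for every integer n ≥ 2, F(n,n) ≥ n^(n/2 − C·n/log n) (real exponentiation, logarithm base 2). -/

import Mathlib

set_option maxHeartbeats 1000000

/-- Two words have a reverse if they agree crosswise on a pair of positions
with distinct letters. -/
def HasReverse {k n : ℕ} (w x : Fin k → Fin n) : Prop :=
  ∃ i j : Fin k, w i ≠ w j ∧ w i = x j ∧ w j = x i

/-- A set of words is reverse-free if no two distinct words in it have a reverse. -/
def ReverseFree {k n : ℕ} (S : Set (Fin k → Fin n)) : Prop :=
  ∀ w ∈ S, ∀ x ∈ S, w ≠ x → ¬ HasReverse w x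

/-- `F n k`: maximum size of a reverse-free set of repetition-free words
of length `k` over the alphabet `[n]`. -/
noncomputable def F (n k : ℕ) : ℕ :=
  sSup {m | ∃ S : Finset (Fin k → Fin n),
    (∀ w ∈ S, Function.Injective w) ∧ ReverseFree (S : Set (Fin k → Fin n)) ∧ S.card = m}

/-- `Fbar n k`: maximum size of a reverse-free set of arbitrary words
of length `k` over the alphabet `[n]`. -/
noncomputable def Fbar (n k : ℕ) : ℕ :=
  sSup {m | ∃ S : Finset (Fin k → Fin n), ReverseFree (S : Set (Fin k → Fin n)) ∧ S.card = m}

open Function Finset Real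

namespace RF

def Pairs (n : ℕ) := {p : Fin n × Fin n // p.1 < p.2}
def NZ (t : ℕ) := {q : Fin t × Fin t // ¬((q.1 : ℕ) = 0 ∧ (q.2 : ℕ) = 0)}
instance {n} : Fintype (Pairs n) := by unfold Pairs; infer_instance
instance {t} : Fintype (NZ t) := by unfold NZ; infer_instance
noncomputable def K (n : ℕ) : ℕ := Fintype.card (Pairs n)

def Conds (n t : ℕ) (w : Fin n → Fin n) (φ : Fin n → Fin n → Fin t) : Prop :=
  (∀ i, (φ i (w i) : ℕ) = 0) ∧
    ∀ i j, i ≠ j → ¬((φ i (w j) : ℕ) = 0 ∧ (φ j (w i) : ℕ) = 0)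

instance {n t} (w : Fin n → Fin n) (φ : Fin n → Fin n → Fin t) : Decidable (Conds n t w φ) := by
  unfold Conds; infer_instance

variable {n t : ℕ}

/-- dominant sets are reverse-free -/
lemma conds_reverseFree (φ : Fin n → Fin n → Fin t)
    (S : Finset (Fin n → Fin n)) (hS : ∀ w ∈ S, Conds n t w φ) :
    ReverseFree (S : Set (Fin n → Fin n)) := by
  rintro w hw x hx hne ⟨i, j, hij, h1, h2⟩
  have hij' : i ≠ j := fun h => hij (by rw [h])
  have hwconds := hS w hw
  have hxconds := hS x hx
  have hx1 : (φ i (w j) : ℕ) = 0 := by rw [h2]; exact hxconds.1 i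
  have hx2 : (φ j (w i) : ℕ) = 0 := by rw [h1]; exact hxconds.1 j
  exact hwconds.2 i j hij' ⟨hx1, hx2⟩

/-- the trivial lower bound for F -/
lemma F_ge_card (S : Finset (Fin n → Fin n)) (hinj : ∀ w ∈ S, Function.Injective w)
    (hrf : ReverseFree (S : Set (Fin n → Fin n))) : S.card ≤ F n n := by
  apply le_csSup
  · refine ⟨Fintype.card (Fin n → Fin n), ?_⟩
    rintro m ⟨T, -, -, rfl⟩
    exact Finset.card_le_univ T
  · exact ⟨S, hinj, hrf, rfl⟩

lemma one_le_F (n : ℕ) : 1 ≤ F n n := by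
  have := F_ge_card ({id} : Finset (Fin n → Fin n)) (by
      intro w hw
      simp only [Finset.mem_singleton] at hw
      subst hw; exact fun a b h => h)
    (by
      intro w hw x hx hne
      simp only [Finset.coe_singleton, Set.mem_singleton_iff] at hw hx
      exact absurd (hw.trans hx.symm) hne)
  simpa using this


lemma card_NZ (ht : 2 ≤ t) : Fintype.card (NZ t) = t * t - 1 := by
  have h0 : 0 < t := by omega
  have h : Fintype.card (NZ t) =
      Fintype.card (Fin t × Fin t) - Fintype.card {q : Fin t × Fin t // (q.1 : ℕ) = 0 ∧ (q.2 : ℕ) = 0} :=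
    Fintype.card_subtype_compl _
  rw [h]
  have hcard1 : Fintype.card {q : Fin t × Fin t // (q.1 : ℕ) = 0 ∧ (q.2 : ℕ) = 0} = 1 := by
    rw [Fintype.card_eq_one_iff]
    refine ⟨⟨(⟨0, h0⟩, ⟨0, h0⟩), rfl, rfl⟩, ?_⟩
    rintro ⟨⟨a, b⟩, ha, hb⟩
    exact Subtype.ext (Prod.ext (Fin.ext ha) (Fin.ext hb))
  rw [hcard1]
  simp [Fintype.card_prod]

lemma two_K (n : ℕ) : n + 2 * K n = n * n := by
  classical
  have e3 : Pairs n × Bool ≃ {p : Fin n × Fin n // ¬ p.1 = p.2} := by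
    refine ⟨fun x => if x.2 then ⟨(x.1.1.2, x.1.1.1), (ne_of_lt x.1.2).symm⟩
        else ⟨x.1.1, ne_of_lt x.1.2⟩,
      fun q => if h : q.1.1 < q.1.2 then (⟨q.1, h⟩, false)
        else (⟨(q.1.2, q.1.1), lt_of_le_of_ne (le_of_not_gt h) (Ne.symm q.2)⟩, true), ?_, ?_⟩
    · rintro ⟨⟨⟨a, b⟩, hab⟩, c⟩
      cases c with
      | false =>
        simp only [Bool.false_eq_true, if_false]
        have : (⟨(a, b), ne_of_lt hab⟩ : {p : Fin n × Fin n // ¬ p.1 = p.2}).1.1 < b := hab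
        simp only [dif_pos hab]
      | true =>
        simp only [if_true]
        have hba : ¬ ((b, a).1 < (b, a).2) := not_lt.2 (le_of_lt hab)
        simp only [dif_neg hba]
    · rintro ⟨⟨a, b⟩, hab⟩
      by_cases h : a < b
      · simp only [dif_pos h, Bool.false_eq_true, if_false]
      · simp only [dif_neg h, if_true]
  have ediag : {p : Fin n × Fin n // p.1 = p.2} ≃ Fin n :=
    ⟨fun q => q.1.1, fun i => ⟨(i, i), rfl⟩,
     by rintro ⟨⟨a, b⟩, h⟩; cases h; rfl,
     fun i => rfl⟩
  have hne : Fintype.card {p : Fin n × Fin n // ¬ p.1 = p.2} = n * n - n := by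
    rw [Fintype.card_subtype_compl, Fintype.card_congr ediag]
    simp [Fintype.card_prod]
  have h2 : 2 * K n = n * n - n := by
    have := Fintype.card_congr e3
    rw [Fintype.card_prod, Fintype.card_bool, hne] at this
    have hK : K n = Fintype.card (Pairs n) := rfl
    rw [hK]
    omega
  have hle : n ≤ n * n := by
    rcases Nat.eq_zero_or_pos n with h | h
    · simp [h]
    · exact Nat.le_mul_of_pos_left n h
  omega


/-- count of φ's satisfying Conds for a fixed injective w -/
lemma count_phi (ht : 2 ≤ t) (w : Fin n → Fin n) (hw : Function.Injective w) :
    (Fintype.card (NZ t)) ^ (K n) ≤ Fintype.card {φ : Fin n → Fin n → Fin t // Conds n t w φ} := by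
  classical
  have h0t : 0 < t := by omega
  have hbij : Function.Bijective w := (Finite.injective_iff_bijective).mp hw
  set ew : Fin n ≃ Fin n := Equiv.ofBijective w hbij with hew
  have hewa : ∀ i, ew i = w i := fun i => rfl
  have hsymm : ∀ i, ew.symm (w i) = i := by
    intro i; rw [← hewa i]; exact Equiv.symm_apply_apply ew i
  -- the auxiliary ψ
  let ψaux : (Pairs n → NZ t) → Fin n → Fin n → Fin t := fun F i j =>
    if h : i < j then (F ⟨(i, j), h⟩).1.1
    else if h' : j < i then (F ⟨(j, i), h'⟩).1.2
    else ⟨0, h0t⟩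
  let φaux : (Pairs n → NZ t) → Fin n → Fin n → Fin t := fun F i v =>
    ψaux F i (ew.symm v)
  have hφψ : ∀ F i j, φaux F i (w j) = ψaux F i j := by
    intro F i j
    show ψaux F i (ew.symm (w j)) = ψaux F i j
    rw [hsymm]
  have hconds : ∀ F, Conds n t w (φaux F) := by
    intro F
    constructor
    · intro i
      rw [hφψ]
      show ((if h : i < i then (F ⟨(i, i), h⟩).1.1
        else if h' : i < i then (F ⟨(i, i), h'⟩).1.2 else ⟨0, h0t⟩ : Fin t) : ℕ) = 0
      rw [dif_neg (lt_irrefl i), dif_neg (lt_irrefl i)]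
    · intro i j hij
      rw [hφψ, hφψ]
      rcases lt_or_gt_of_ne hij with h | h
      · have e1 : ψaux F i j = (F ⟨(i, j), h⟩).1.1 := dif_pos h
        have e2 : ψaux F j i = (F ⟨(i, j), h⟩).1.2 := by
          show (if h' : j < i then (F ⟨(j, i), h'⟩).1.1
            else if h'' : i < j then (F ⟨(i, j), h''⟩).1.2 else ⟨0, h0t⟩) = _
          rw [dif_neg (not_lt.2 (le_of_lt h)), dif_pos h]
        rw [e1, e2]
        exact (F ⟨(i, j), h⟩).2
      · have e1 : ψaux F i j = (F ⟨(j, i), h⟩).1.2 := by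
          show (if h' : i < j then (F ⟨(i, j), h'⟩).1.1
            else if h'' : j < i then (F ⟨(j, i), h''⟩).1.2 else ⟨0, h0t⟩) = _
          rw [dif_neg (not_lt.2 (le_of_lt h)), dif_pos h]
        have e2 : ψaux F j i = (F ⟨(j, i), h⟩).1.1 := dif_pos h
        rw [e1, e2]
        intro hcontra
        exact (F ⟨(j, i), h⟩).2 ⟨hcontra.2, hcontra.1⟩
  -- the injection
  have hinj : Function.Injective (fun F => (⟨φaux F, hconds F⟩ :
      {φ : Fin n → Fin n → Fin t // Conds n t w φ})) := by
    intro F G hFG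
    have hFG' : ∀ i v, φaux F i v = φaux G i v := by
      intro i v
      exact congrFun (congrFun (congrArg Subtype.val hFG) i) v
    funext p
    obtain ⟨⟨a, b⟩, hab⟩ := p
    have hab' : (a : Fin n) < b := hab
    apply Subtype.ext
    apply Prod.ext
    · have h1 : ψaux F a b = (F ⟨(a, b), hab⟩).1.1 := dif_pos hab'
      have h2 : ψaux G a b = (G ⟨(a, b), hab⟩).1.1 := dif_pos hab'
      have := hFG' a (w b)
      rw [hφψ, hφψ, h1, h2] at this
      exact this
    · have h1 : ψaux F b a = (F ⟨(a, b), hab⟩).1.2 := by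
        show (if h' : b < a then (F ⟨(b, a), h'⟩).1.1
          else if h'' : a < b then (F ⟨(a, b), h''⟩).1.2 else ⟨0, h0t⟩) = _
        rw [dif_neg (not_lt.2 (le_of_lt hab')), dif_pos hab']
      have h2 : ψaux G b a = (G ⟨(a, b), hab⟩).1.2 := by
        show (if h' : b < a then (G ⟨(b, a), h'⟩).1.1
          else if h'' : a < b then (G ⟨(a, b), h''⟩).1.2 else ⟨0, h0t⟩) = _
        rw [dif_neg (not_lt.2 (le_of_lt hab')), dif_pos hab']
      have := hFG' b (w a)
      rw [hφψ, hφψ, h1, h2] at this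
      exact this
  calc (Fintype.card (NZ t)) ^ (K n) = Fintype.card (Pairs n → NZ t) := by
        rw [Fintype.card_fun]
        rfl
    _ ≤ Fintype.card {φ : Fin n → Fin n → Fin t // Conds n t w φ} :=
        Fintype.card_le_of_injective _ hinj


/-- main counting lemma -/
lemma exists_good_phi (ht : 2 ≤ t) :
    ∃ φ : Fin n → Fin n → Fin t,
      (n.factorial * (t * t - 1) ^ (K n)) ≤
        ((univ.filter (fun w : Fin n → Fin n => Function.Injective w ∧ Conds n t w φ)).card) * t ^ (n * n) := by
  classical
  have h0t : 0 < t := by omega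
  have hnefin : Nonempty (Fin t) := ⟨⟨0, h0t⟩⟩
  set f : (Fin n → Fin n → Fin t) → ℕ :=
    fun φ => (univ.filter (fun w : Fin n → Fin n => Function.Injective w ∧ Conds n t w φ)).card with hf
  -- lower bound on the total sum
  have hT : n.factorial * (t * t - 1) ^ (K n) ≤ ∑ φ : Fin n → Fin n → Fin t, f φ := by
    have step1 : ∑ φ : Fin n → Fin n → Fin t, f φ
        = ∑ w : Fin n → Fin n, ∑ φ : Fin n → Fin n → Fin t,
            (if Function.Injective w ∧ Conds n t w φ then 1 else 0) := by
      rw [Finset.sum_comm]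
      apply Finset.sum_congr rfl
      intro φ _
      exact Finset.card_filter _ _
    have step2 : ∀ w : Fin n → Fin n,
        (∑ φ : Fin n → Fin n → Fin t, (if Function.Injective w ∧ Conds n t w φ then 1 else 0))
          = if Function.Injective w then (univ.filter (fun φ => Conds n t w φ)).card else 0 := by
      intro w
      by_cases hw : Function.Injective w
      · simp only [hw, true_and, if_true]
        rw [Finset.card_filter]
      · simp [hw]
    have step3 : ∑ w : Fin n → Fin n, (if Function.Injective w then (univ.filter (fun φ => Conds n t w φ)).card else 0)
        = ∑ w ∈ univ.filter (fun w : Fin n → Fin n => Function.Injective w),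
            (univ.filter (fun φ => Conds n t w φ)).card := by
      rw [Finset.sum_filter]
    have step4 : ∀ w ∈ univ.filter (fun w : Fin n → Fin n => Function.Injective w),
        (t * t - 1) ^ (K n) ≤ (univ.filter (fun φ => Conds n t w φ)).card := by
      intro w hw
      rw [Finset.mem_filter] at hw
      have := count_phi ht w hw.2
      rw [card_NZ ht] at this
      rwa [Fintype.card_subtype] at this
    have step5 : n.factorial ≤ (univ.filter (fun w : Fin n → Fin n => Function.Injective w)).card := by
      have hinj : Function.Injective (fun (e : Equiv.Perm (Fin n)) =>
          (⟨(e : Fin n → Fin n), e.injective⟩ : {w : Fin n → Fin n // Function.Injective w})) := by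
        intro e₁ e₂ h
        apply Equiv.ext
        intro x
        exact congrFun (congrArg Subtype.val h) x
      have := Fintype.card_le_of_injective _ hinj
      rw [Fintype.card_perm, Fintype.card_fin] at this
      rwa [Fintype.card_subtype] at this
    calc n.factorial * (t * t - 1) ^ (K n)
        ≤ (univ.filter (fun w : Fin n → Fin n => Function.Injective w)).card * (t * t - 1) ^ (K n) :=
          Nat.mul_le_mul_right _ step5
      _ ≤ ∑ w ∈ univ.filter (fun w : Fin n → Fin n => Function.Injective w),
            (univ.filter (fun φ => Conds n t w φ)).card := by
          have := Finset.card_nsmul_le_sum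
            (univ.filter (fun w : Fin n → Fin n => Function.Injective w))
            (fun w => (univ.filter (fun φ => Conds n t w φ)).card)
            ((t * t - 1) ^ (K n)) step4
          simpa [smul_eq_mul, Nat.mul_comm] using this
      _ = ∑ w : Fin n → Fin n, (if Function.Injective w then (univ.filter (fun φ => Conds n t w φ)).card else 0) := step3.symm
      _ = ∑ φ : Fin n → Fin n → Fin t, f φ := by
          rw [step1]
          exact (Finset.sum_congr rfl (fun w _ => step2 w)).symm
  -- pigeonhole
  obtain ⟨φ₀, -, hmax⟩ := Finset.exists_max_image (univ : Finset (Fin n → Fin n → Fin t)) f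
    Finset.univ_nonempty
  refine ⟨φ₀, ?_⟩
  have hsum_le : ∑ φ : Fin n → Fin n → Fin t, f φ ≤
      (Fintype.card (Fin n → Fin n → Fin t)) * f φ₀ := by
    have := Finset.sum_le_card_nsmul (univ : Finset (Fin n → Fin n → Fin t)) f (f φ₀)
      (fun x _ => hmax x (Finset.mem_univ x))
    simpa [Finset.card_univ, smul_eq_mul] using this
  have hcardΦ : Fintype.card (Fin n → Fin n → Fin t) = t ^ (n * n) := by
    rw [Fintype.card_fun, Fintype.card_fun, Fintype.card_fin, Fintype.card_fin, ← pow_mul]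
  calc n.factorial * (t * t - 1) ^ (K n) ≤ ∑ φ : Fin n → Fin n → Fin t, f φ := hT
    _ ≤ (Fintype.card (Fin n → Fin n → Fin t)) * f φ₀ := hsum_le
    _ = f φ₀ * t ^ (n * n) := by rw [hcardΦ, Nat.mul_comm]


/-- factorial lower bound: n^n ≤ 3^n * n! -/
lemma pow_le_three_pow_mul_factorial (n : ℕ) :
    (n : ℝ) ^ n ≤ 3 ^ n * (n.factorial : ℝ) := by
  have hxn : (0:ℝ) ≤ (n:ℝ) := Nat.cast_nonneg n
  have hterm : (n:ℝ) ^ n / (n.factorial : ℝ) ≤ Real.exp n := by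
    have hsum := Real.sum_le_exp_of_nonneg hxn (n + 1)
    have hmem : n ∈ Finset.range (n + 1) := Finset.self_mem_range_succ n
    have hsingle : (n:ℝ) ^ n / (n.factorial : ℝ) ≤ ∑ i ∈ Finset.range (n + 1), (n:ℝ) ^ i / i.factorial := by
      apply Finset.single_le_sum (f := fun i => (n:ℝ) ^ i / (i.factorial : ℝ)) _ hmem
      intro i _
      positivity
    exact hsingle.trans hsum
  have hfacpos : (0:ℝ) < (n.factorial : ℝ) := by
    exact_mod_cast Nat.factorial_pos n
  have h1 : (n:ℝ) ^ n ≤ (n.factorial : ℝ) * Real.exp n := by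
    rw [div_le_iff₀ hfacpos] at hterm
    linarith [hterm]
  have hexp : Real.exp (n : ℝ) ≤ 3 ^ n := by
    have : Real.exp ((n:ℕ) * (1:ℝ)) = Real.exp 1 ^ (n:ℕ) := Real.exp_nat_mul 1 n
    have he3 : Real.exp 1 ≤ 3 := by
      have := Real.exp_one_lt_d9
      linarith
    calc Real.exp (n:ℝ) = Real.exp 1 ^ (n:ℕ) := by rw [← this]; norm_num
      _ ≤ 3 ^ n := by
          apply pow_le_pow_left₀ (le_of_lt (Real.exp_pos 1)) he3
  calc (n:ℝ) ^ n ≤ (n.factorial : ℝ) * Real.exp n := h1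
    _ ≤ (n.factorial : ℝ) * 3 ^ n := by
        apply mul_le_mul_of_nonneg_left hexp (le_of_lt hfacpos)
    _ = 3 ^ n * (n.factorial : ℝ) := by ring

/-- 1 - x ≥ exp(-2x) for 0 ≤ x ≤ 1/2 -/
lemma exp_neg_two_mul_le (x : ℝ) (h0 : 0 ≤ x) (h2 : x ≤ 1/2) :
    Real.exp (-(2*x)) ≤ 1 - x := by
  have h1 : 1 + 2*x ≤ Real.exp (2*x) := by
    have := Real.add_one_le_exp (2*x)
    linarith
  have hpos : (0:ℝ) < Real.exp (2*x) := Real.exp_pos _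
  have key : 1 ≤ (1 - x) * Real.exp (2*x) := by nlinarith
  have hinv : (Real.exp (2*x))⁻¹ * Real.exp (2*x) = 1 := inv_mul_cancel₀ (ne_of_gt hpos)
  have hinvpos : (0:ℝ) < (Real.exp (2*x))⁻¹ := by positivity
  rw [Real.exp_neg]
  nlinarith


lemma numeric_main (n t Kv Fc : ℕ) (hn : 8 ≤ n) (ht : t = n.sqrt) (hK : n + 2*Kv = n*n)
    (hnat : n.factorial * (t*t - 1)^Kv ≤ Fc * t^(n*n)) :
    (n:ℝ) ^ ((n:ℝ)/2) ≤ 2^(9*n) * (Fc:ℝ) := by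
  have ht2 : 2 ≤ t := by
    rw [ht, Nat.le_sqrt]; omega
  have htt : t * t ≤ n := by rw [ht]; exact Nat.sqrt_le n
  have htt4 : n ≤ 4 * (t * t) := by
    have h := Nat.lt_succ_sqrt n
    rw [← ht] at h
    nlinarith
  have hN8 : (8:ℝ) ≤ (n:ℝ) := by exact_mod_cast hn
  have hNpos : (0:ℝ) < (n:ℝ) := by linarith
  have hT2 : (2:ℝ) ≤ (t:ℝ) := by exact_mod_cast ht2
  have hTpos : (0:ℝ) < (t:ℝ) := by linarith
  have hTTle : (t:ℝ) * (t:ℝ) ≤ (n:ℝ) := by exact_mod_cast htt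
  have hN4T : (n:ℝ) ≤ 4 * ((t:ℝ) * (t:ℝ)) := by exact_mod_cast htt4
  have hsNnonneg : 0 ≤ Real.sqrt (n:ℝ) := Real.sqrt_nonneg _
  have hTsN : (t:ℝ) ≤ Real.sqrt (n:ℝ) := by
    apply Real.le_sqrt_of_sq_le
    nlinarith
  have hsq : Real.sqrt (n:ℝ) * Real.sqrt (n:ℝ) = (n:ℝ) := Real.mul_self_sqrt (le_of_lt hNpos)
  -- cast the natural inequality to ℝ
  have h1tt : 1 ≤ t * t := by nlinarith
  have hnatR : (n.factorial : ℝ) * ((t:ℝ)*(t:ℝ) - 1)^Kv ≤ (Fc:ℝ) * (t:ℝ)^(n*n) := by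
    have hcast2 : ((n.factorial * (t*t - 1)^Kv : ℕ) : ℝ) ≤ ((Fc * t^(n*n) : ℕ) : ℝ) := by
      exact_mod_cast hnat
    have hc : ((t*t - 1 : ℕ) : ℝ) = (t:ℝ) * (t:ℝ) - 1 := by
      push_cast [Nat.cast_sub h1tt]
      ring
    push_cast at hcast2 ⊢
    rw [show ((t:ℝ) * (t:ℝ) - 1) = ((t:ℝ)*(t:ℝ) - 1) from rfl]
    calc (n.factorial : ℝ) * ((t:ℝ)*(t:ℝ) - 1)^Kv
        = (n.factorial : ℝ) * (((t*t - 1 : ℕ)):ℝ)^Kv := by rw [hc]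
      _ ≤ (Fc:ℝ) * (t:ℝ)^(n*n) := by
          push_cast
          convert hcast2 using 3 <;> push_cast [Nat.cast_sub h1tt] <;> ring
  -- the basic geometry of exponents
  have hTnn : (t:ℝ)^(n*n) = (t:ℝ)^n * ((t:ℝ)*(t:ℝ))^Kv := by
    rw [← hK, pow_add]
    congr 1
    rw [two_mul, pow_add, ← mul_pow]
  -- bound (T*T)^Kv against (T*T-1)^Kv
  have hx0 : (0:ℝ) ≤ 4 / (n:ℝ) := by positivity
  have hx2 : 4 / (n:ℝ) ≤ 1/2 := by
    rw [div_le_div_iff₀ hNpos (by norm_num)]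
    linarith
  have hexpx := exp_neg_two_mul_le (4 / (n:ℝ)) hx0 hx2
  have hTTpos : (0:ℝ) < (t:ℝ) * (t:ℝ) := by positivity
  have hinvTT : 1 / ((t:ℝ)*(t:ℝ)) ≤ 4 / (n:ℝ) := by
    rw [div_le_div_iff₀ hTTpos hNpos]
    linarith
  have hTT1pos : (0:ℝ) < (t:ℝ)*(t:ℝ) - 1 := by nlinarith
  have hb2 : ((t:ℝ)*(t:ℝ)) * Real.exp (-(2*(4/(n:ℝ)))) ≤ (t:ℝ)*(t:ℝ) - 1 := by
    have step : Real.exp (-(2*(4/(n:ℝ)))) ≤ 1 - 1/((t:ℝ)*(t:ℝ)) := by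
      calc Real.exp (-(2*(4/(n:ℝ)))) ≤ 1 - 4/(n:ℝ) := hexpx
        _ ≤ 1 - 1/((t:ℝ)*(t:ℝ)) := by linarith
    calc ((t:ℝ)*(t:ℝ)) * Real.exp (-(2*(4/(n:ℝ))))
        ≤ ((t:ℝ)*(t:ℝ)) * (1 - 1/((t:ℝ)*(t:ℝ))) := by
          apply mul_le_mul_of_nonneg_left step (le_of_lt hTTpos)
      _ = (t:ℝ)*(t:ℝ) - 1 := by
          field_simp
  have hb3 : (t:ℝ)*(t:ℝ) ≤ Real.exp (2*(4/(n:ℝ))) * ((t:ℝ)*(t:ℝ) - 1) := by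
    have hepos : (0:ℝ) < Real.exp (2*(4/(n:ℝ))) := Real.exp_pos _
    have := mul_le_mul_of_nonneg_left hb2 (le_of_lt hepos)
    rw [← mul_assoc] at this
    rw [show Real.exp (2*(4/(n:ℝ))) * ((t:ℝ)*(t:ℝ)) * Real.exp (-(2*(4/(n:ℝ))))
        = ((t:ℝ)*(t:ℝ)) * (Real.exp (2*(4/(n:ℝ))) * Real.exp (-(2*(4/(n:ℝ))))) from by ring] at this
    rw [← Real.exp_add] at this
    simp only [add_neg_cancel, Real.exp_zero, mul_one] at this
    exact this
  have hb4 : ((t:ℝ)*(t:ℝ))^Kv ≤ Real.exp (4*(n:ℝ)) * ((t:ℝ)*(t:ℝ) - 1)^Kv := by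
    have h1 : ((t:ℝ)*(t:ℝ))^Kv ≤ (Real.exp (2*(4/(n:ℝ))))^Kv * ((t:ℝ)*(t:ℝ) - 1)^Kv := by
      rw [← mul_pow]
      exact pow_le_pow_left₀ (le_of_lt hTTpos) hb3 Kv
    have h2 : (Real.exp (2*(4/(n:ℝ))))^Kv ≤ Real.exp (4*(n:ℝ)) := by
      rw [← Real.exp_nat_mul]
      apply Real.exp_le_exp.2
      have h2Kv : (2*Kv : ℝ) ≤ (n:ℝ)*(n:ℝ) := by
        have : (n + 2*Kv : ℕ) = (n*n : ℕ) := hK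
        have := congrArg (fun x : ℕ => (x:ℝ)) this
        push_cast at this
        linarith
      rw [show ((Kv:ℝ) * (2*(4/(n:ℝ)))) = 8*(Kv:ℝ)/(n:ℝ) from by ring]
      rw [div_le_iff₀ hNpos]
      nlinarith
    calc ((t:ℝ)*(t:ℝ))^Kv ≤ (Real.exp (2*(4/(n:ℝ))))^Kv * ((t:ℝ)*(t:ℝ) - 1)^Kv := h1
      _ ≤ Real.exp (4*(n:ℝ)) * ((t:ℝ)*(t:ℝ) - 1)^Kv := by
          apply mul_le_mul_of_nonneg_right h2
          positivity
  have hexp81 : Real.exp (4*(n:ℝ)) ≤ 81^n := by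
    have h4 : Real.exp (4*(n:ℝ)) = (Real.exp 4)^n := by
      rw [← Real.exp_nat_mul]
      congr 1
      ring
    rw [h4]
    apply pow_le_pow_left₀ (le_of_lt (Real.exp_pos 4))
    have : Real.exp 4 = (Real.exp 1)^(4:ℕ) := by
      rw [← Real.exp_nat_mul]
      norm_num
    rw [this]
    have he3 : Real.exp 1 ≤ 3 := by
      have := Real.exp_one_lt_d9
      linarith
    calc (Real.exp 1)^(4:ℕ) ≤ 3^(4:ℕ) := by
          apply pow_le_pow_left₀ (le_of_lt (Real.exp_pos 1)) he3
      _ = 81 := by norm_num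
  -- The grand chain
  have hG : (Real.sqrt (n:ℝ))^n * (t:ℝ)^(n*n) ≤ 2^(9*n) * ((n.factorial:ℝ) * ((t:ℝ)*(t:ℝ) - 1)^Kv) := by
    calc (Real.sqrt (n:ℝ))^n * (t:ℝ)^(n*n)
        = (Real.sqrt (n:ℝ))^n * ((t:ℝ)^n * ((t:ℝ)*(t:ℝ))^Kv) := by rw [hTnn]
      _ ≤ (Real.sqrt (n:ℝ))^n * ((Real.sqrt (n:ℝ))^n * ((t:ℝ)*(t:ℝ))^Kv) := by
          apply mul_le_mul_of_nonneg_left _ (by positivity)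
          apply mul_le_mul_of_nonneg_right _ (by positivity)
          exact pow_le_pow_left₀ (le_of_lt hTpos) hTsN n
      _ = (n:ℝ)^n * ((t:ℝ)*(t:ℝ))^Kv := by
          rw [← mul_assoc, ← mul_pow, hsq]
      _ ≤ (3^n * (n.factorial:ℝ)) * ((t:ℝ)*(t:ℝ))^Kv := by
          apply mul_le_mul_of_nonneg_right (pow_le_three_pow_mul_factorial n) (by positivity)
      _ ≤ (3^n * (n.factorial:ℝ)) * (Real.exp (4*(n:ℝ)) * ((t:ℝ)*(t:ℝ) - 1)^Kv) := by
          apply mul_le_mul_of_nonneg_left hb4 (by positivity)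
      _ ≤ (3^n * (n.factorial:ℝ)) * ((81:ℝ)^n * ((t:ℝ)*(t:ℝ) - 1)^Kv) := by
          apply mul_le_mul_of_nonneg_left _ (by positivity)
          apply mul_le_mul_of_nonneg_right hexp81 (by positivity)
      _ = (3^n * 81^n) * ((n.factorial:ℝ) * ((t:ℝ)*(t:ℝ) - 1)^Kv) := by ring
      _ ≤ 2^(9*n) * ((n.factorial:ℝ) * ((t:ℝ)*(t:ℝ) - 1)^Kv) := by
          apply mul_le_mul_of_nonneg_right _ (by positivity)
          rw [← mul_pow, pow_mul]
          apply pow_le_pow_left₀ (by norm_num)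
          norm_num
  -- combine with hnatR and cancel
  have hchain : (Real.sqrt (n:ℝ))^n * (t:ℝ)^(n*n) ≤ (2^(9*n) * (Fc:ℝ)) * (t:ℝ)^(n*n) := by
    calc (Real.sqrt (n:ℝ))^n * (t:ℝ)^(n*n)
        ≤ 2^(9*n) * ((n.factorial:ℝ) * ((t:ℝ)*(t:ℝ) - 1)^Kv) := hG
      _ ≤ 2^(9*n) * ((Fc:ℝ) * (t:ℝ)^(n*n)) := by
          apply mul_le_mul_of_nonneg_left hnatR (by positivity)
      _ = (2^(9*n) * (Fc:ℝ)) * (t:ℝ)^(n*n) := by ring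
  have hcancel : (Real.sqrt (n:ℝ))^n ≤ 2^(9*n) * (Fc:ℝ) := by
    have hp : (0:ℝ) < (t:ℝ)^(n*n) := by positivity
    exact le_of_mul_le_mul_right hchain hp
  -- rewrite the LHS
  have hrw : (n:ℝ) ^ ((n:ℝ)/2) = (Real.sqrt (n:ℝ))^n := by
    rw [Real.sqrt_eq_rpow]
    rw [← Real.rpow_natCast ((n:ℝ) ^ (1/(2:ℝ))) n]
    rw [← Real.rpow_mul (le_of_lt hNpos)]
    congr 1
    ring
  rw [hrw]
  exact hcancel


/-- the construction bound -/
lemma construction (n : ℕ) (hn : 8 ≤ n) :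
    n.factorial * (n.sqrt * n.sqrt - 1) ^ (K n) ≤ (F n n) * n.sqrt ^ (n * n) := by
  have ht2 : 2 ≤ n.sqrt := by rw [Nat.le_sqrt]; omega
  obtain ⟨φ, hφ⟩ := exists_good_phi (n := n) ht2
  set S := univ.filter (fun w : Fin n → Fin n => Function.Injective w ∧ Conds n (n.sqrt) w φ) with hSdef
  have hinj : ∀ w ∈ S, Function.Injective w := by
    intro w hw
    rw [hSdef, Finset.mem_filter] at hw
    exact hw.2.1
  have hconds : ∀ w ∈ S, Conds n (n.sqrt) w φ := by
    intro w hw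
    rw [hSdef, Finset.mem_filter] at hw
    exact hw.2.2
  have hrf := conds_reverseFree φ S hconds
  have hFS := F_ge_card S hinj hrf
  calc n.factorial * (n.sqrt * n.sqrt - 1) ^ (K n) ≤ S.card * n.sqrt ^ (n * n) := hφ
    _ ≤ (F n n) * n.sqrt ^ (n * n) := Nat.mul_le_mul_right _ hFS


end RF

theorem stmt4 : ∃ C : ℝ, C > 0 ∧ ∀ n : ℕ, 2 ≤ n →
    (n : ℝ) ^ ((n : ℝ) / 2 - C * n / Real.logb 2 n) ≤ (F n n : ℝ) := by
  refine ⟨9, by norm_num, ?_⟩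
  intro n hn
  have hN2 : (2:ℝ) ≤ (n:ℝ) := by exact_mod_cast hn
  have hNpos : (0:ℝ) < (n:ℝ) := by linarith
  have hN1 : (1:ℝ) < (n:ℝ) := by linarith
  have hlogbpos : 0 < Real.logb 2 (n:ℝ) := Real.logb_pos (by norm_num) hN1
  by_cases hsmall : n ≤ 262144
  · -- trivial branch
    have hexp_nonpos : (n:ℝ)/2 - 9 * n / Real.logb 2 n ≤ 0 := by
      have hlogb_le : Real.logb 2 (n:ℝ) ≤ 18 := by
        rw [Real.logb_le_iff_le_rpow (by norm_num) hNpos]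
        have : ((2:ℝ) ^ (18:ℝ)) = ((2:ℝ) ^ (18:ℕ)) := by
          rw [← Real.rpow_natCast]
          norm_num
        rw [this]
        have : (n:ℝ) ≤ 262144 := by exact_mod_cast hsmall
        calc (n:ℝ) ≤ 262144 := this
          _ = (2:ℝ)^(18:ℕ) := by norm_num
      have h1 : 9 * (n:ℝ) / 18 ≤ 9 * n / Real.logb 2 n :=
        div_le_div_of_nonneg_left (by positivity) hlogbpos hlogb_le
      have h2 : (n:ℝ)/2 = 9 * (n:ℝ)/18 := by ring
      linarith
    calc (n : ℝ) ^ ((n : ℝ) / 2 - 9 * n / Real.logb 2 n) ≤ 1 :=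
          Real.rpow_le_one_of_one_le_of_nonpos (by linarith) hexp_nonpos
      _ ≤ (F n n : ℝ) := by exact_mod_cast RF.one_le_F n
  · -- main branch
    push_neg at hsmall
    have hn8 : 8 ≤ n := by omega
    have hmain := RF.numeric_main n n.sqrt (RF.K n) (F n n) hn8 rfl (RF.two_K n)
      (RF.construction n hn8)
    -- rewrite (n)^(9n/logb 2 n) = 2^(9n)
    have hlogne : Real.log (n:ℝ) ≠ 0 := by
      have := Real.log_pos hN1
      linarith
    have hlog2ne : Real.log 2 ≠ 0 := by
      have := Real.log_pos (by norm_num : (1:ℝ) < 2)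
      linarith
    have hpow_eq : (n:ℝ) ^ ((9 * (n:ℝ)) / Real.logb 2 n) = (2:ℝ) ^ (9*n : ℕ) := by
      rw [Real.rpow_def_of_pos hNpos, Real.logb]
      have harg : Real.log (n:ℝ) * ((9 * (n:ℝ)) / (Real.log (n:ℝ) / Real.log 2))
          = Real.log 2 * ((9*n : ℕ) : ℝ) := by
        field_simp
        push_cast
        ring
      rw [harg, ← Real.rpow_def_of_pos (by norm_num : (0:ℝ) < 2), Real.rpow_natCast]
    have hsplit : (n : ℝ) ^ ((n : ℝ) / 2 - 9 * (n:ℝ) / Real.logb 2 n)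
        = (n:ℝ) ^ ((n:ℝ)/2) / (2:ℝ)^(9*n : ℕ) := by
      rw [Real.rpow_sub hNpos, hpow_eq]
    rw [hsplit, div_le_iff₀ (by positivity)]
    calc (n:ℝ) ^ ((n:ℝ)/2) ≤ 2^(9*n) * (F n n : ℝ) := hmain
      _ = (F n n : ℝ) * 2^(9*n : ℕ) := by ring
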